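/- For every integer n ≥ 32, the thresholds satisfy a_n < b_n, where a_n = min{ j ∈ {2,...,n} : f_n(j) ≤ 0 } and b_n as defined. -/

import Mathlib

open Finset

/-- The threshold `b_n = min{ j : 2 ≤ j ≤ n, ∑_{i=j+1}^n 1/(i-2) ≤ 1/2 }` (empty sum = 0). -/
noncomputable def bThresh (n : ℕ) : ℕ :=
  sInf {j : ℕ | 2 ≤ j ∧ j ≤ n ∧ ∑ i ∈ Finset.Icc (j + 1) n, (1 : ℝ) / ((i : ℝ) - 2) ≤ 1 / 2}

/-- `u_n = (b_n - 2)(2n - 4) ∑_{i=b_n}^n 1/(i-2)`. -/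
noncomputable def uVal (n : ℕ) : ℝ :=
  ((bThresh n : ℝ) - 2) * (2 * (n : ℝ) - 4) *
    ∑ i ∈ Finset.Icc (bThresh n) n, (1 : ℝ) / ((i : ℝ) - 2)

/-- `f_n(x) = 3x² - (1+4n)x + (n-2)b_n + 2(n+1) + u_n`. -/
noncomputable def fPoly (n : ℕ) (x : ℝ) : ℝ :=
  3 * x ^ 2 - (1 + 4 * (n : ℝ)) * x + ((n : ℝ) - 2) * (bThresh n : ℝ) + 2 * ((n : ℝ) + 1) + uVal n

/-- The threshold `a_n = min{ j : 2 ≤ j ≤ n, f_n(j) ≤ 0 }`. -/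
noncomputable def aThresh (n : ℕ) : ℕ :=
  sInf {j : ℕ | 2 ≤ j ∧ j ≤ n ∧ fPoly n (j : ℝ) ≤ 0}

lemma log_step (a : ℝ) (ha : 1 ≤ a) : 1 / (a + 1) ≤ Real.log (a + 1) - Real.log a := by
  have ha0 : 0 < a := by linarith
  have h1 : 0 < a / (a + 1) := by positivity
  have := Real.log_le_sub_one_of_pos h1
  rw [Real.log_div (by linarith) (by linarith)] at this
  have : Real.log a - Real.log (a+1) ≤ a / (a+1) - 1 := this
  have heq : a / (a+1) - 1 = -(1/(a+1)) := by field_simp; ring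
  linarith [heq ▸ this]

lemma tail_le_log (m : ℕ) (hm : 3 ≤ m) :
    ∀ n : ℕ, m ≤ n → ∑ i ∈ Icc (m+1) n, (1:ℝ)/((i:ℝ)-2)
      ≤ Real.log ((n:ℝ)-2) - Real.log ((m:ℝ)-2) := by
  intro n hn
  induction n, hn using Nat.le_induction with
  | base => simp [Finset.Icc_eq_empty_of_lt (by omega : m + 1 > m)]
  | succ n hn ih =>
      rw [Finset.sum_Icc_succ_top (by omega)]
      have h1 : (1:ℝ) ≤ (n:ℝ) - 2 := by
        have : (3:ℝ) ≤ (n:ℝ) := by exact_mod_cast le_trans hm hn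
        linarith
      have := log_step ((n:ℝ)-2) h1
      have hcast : ((n+1:ℕ):ℝ) - 2 = ((n:ℝ)-2) + 1 := by push_cast; ring
      rw [hcast]
      linarith

theorem aThresh_lt_bThresh (n : ℕ) (hn : 32 ≤ n) : aThresh n < bThresh n := by
  -- the defining set of b is nonempty
  have hne : {j : ℕ | 2 ≤ j ∧ j ≤ n ∧ ∑ i ∈ Finset.Icc (j + 1) n, (1 : ℝ) / ((i : ℝ) - 2) ≤ 1 / 2}.Nonempty := by
    refine ⟨n, by omega, le_refl n, ?_⟩
    rw [Finset.Icc_eq_empty_of_lt (by omega)]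
    norm_num
  have hbmem : bThresh n ∈ {j : ℕ | 2 ≤ j ∧ j ≤ n ∧ ∑ i ∈ Finset.Icc (j + 1) n, (1 : ℝ) / ((i : ℝ) - 2) ≤ 1 / 2} := Nat.sInf_mem hne
  set b := bThresh n with hbdef
  obtain ⟨hb2, hbn, hbT⟩ := hbmem
  -- b ≥ 3
  have hb3 : 3 ≤ b := by
    rcases Nat.lt_or_ge b 3 with h | h
    · exfalso
      have hb2' : b = 2 := by omega
      rw [hb2'] at hbT
      have h3mem : 3 ∈ Finset.Icc (2+1) n := by
        simp [Finset.mem_Icc]; omega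
      have hsingle : (1:ℝ)/((3:ℕ):ℝ)-2 ≤ 0 := by norm_num
      have : (1:ℝ) ≤ ∑ i ∈ Finset.Icc (2+1) n, (1 : ℝ) / ((i : ℝ) - 2) := by
        have := Finset.single_le_sum (f := fun i : ℕ => (1:ℝ)/((i:ℝ)-2))
          (fun i hi => by
            simp only [Finset.mem_Icc] at hi
            have : (3:ℝ) ≤ (i:ℝ) := by exact_mod_cast hi.1
            exact div_nonneg (by norm_num) (by linarith)) h3mem
        exact (by norm_num : (1:ℝ) = (fun i : ℕ => (1:ℝ)/((i:ℝ)-2)) 3).trans_le this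
      linarith
    · exact h
  -- upper bound: j₀ = 2n/3 is in the set, so 3b ≤ 2n
  have hj0 : 3 * b ≤ 2 * n := by
    set j₀ := 2 * n / 3 with hj0def
    have hj03 : 3 ≤ j₀ := by omega
    have hj0n : j₀ ≤ n := by omega
    have hj0lb : 2 * n - 2 ≤ 3 * j₀ := by omega
    have hmem : j₀ ∈ {j : ℕ | 2 ≤ j ∧ j ≤ n ∧ ∑ i ∈ Finset.Icc (j + 1) n, (1 : ℝ) / ((i : ℝ) - 2) ≤ 1 / 2} := by
      refine ⟨by omega, hj0n, ?_⟩
      have hlog := tail_le_log j₀ hj03 n hj0n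
      have hn32 : (32:ℝ) ≤ (n:ℝ) := by exact_mod_cast hn
      have hkey : Real.log ((n:ℝ)-2) - Real.log ((j₀:ℝ)-2) ≤ 1/2 := by
        have hj0pos : (1:ℝ) ≤ (j₀:ℝ) - 2 := by
          have : (3:ℝ) ≤ (j₀:ℝ) := by exact_mod_cast hj03
          linarith
        rw [← Real.log_div (ne_of_gt (by linarith)) (ne_of_gt (by linarith))]
        have hratio : ((n:ℝ)-2) / ((j₀:ℝ)-2) ≤ Real.exp (1/2) := by
          have he : (1.648:ℝ) < Real.exp (1/2) := by
            have h2 : Real.exp (1/2) ^ 2 = Real.exp 1 := by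
              rw [← Real.exp_nat_mul]; norm_num
            nlinarith [Real.exp_one_gt_d9, Real.exp_pos (1/2:ℝ)]
          have hcast : ((2*n-2:ℕ):ℝ) ≤ 3 * (j₀:ℝ) := by
            exact_mod_cast hj0lb
          have hn' : (32:ℝ) ≤ (n:ℝ) := by exact_mod_cast hn
          have h2n2 : ((2*n-2:ℕ):ℝ) = 2*(n:ℝ) - 2 := by
            push_cast [Nat.cast_sub (by omega : 2 ≤ 2*n)]; ring
          rw [h2n2] at hcast
          have hj0pos' : (0:ℝ) < (j₀:ℝ) - 2 := by linarith
          rw [div_le_iff₀ hj0pos']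
          nlinarith
        calc Real.log (((n:ℝ)-2) / ((j₀:ℝ)-2)) ≤ Real.log (Real.exp (1/2)) := by
              apply Real.log_le_log (by apply div_pos <;> linarith) hratio
          _ = 1/2 := Real.log_exp _
      linarith
    have h := Nat.sInf_le hmem
    have : b ≤ j₀ := h
    omega
  -- bound on uVal
  have hbR : (3:ℝ) ≤ (b:ℝ) := by exact_mod_cast hb3
  have hnR : (32:ℝ) ≤ (n:ℝ) := by exact_mod_cast hn
  have hbnR : (b:ℝ) ≤ (n:ℝ) := by exact_mod_cast hbn
  have h3b : 3 * (b:ℝ) ≤ 2 * (n:ℝ) := by exact_mod_cast hj0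
  have hsplit : ∑ i ∈ Finset.Icc b n, (1 : ℝ) / ((i : ℝ) - 2)
      = 1/((b:ℝ)-2) + ∑ i ∈ Finset.Icc (b+1) n, (1 : ℝ) / ((i : ℝ) - 2) := by
    have : Finset.Icc b n = insert b (Finset.Icc (b+1) n) := by
      ext x; simp only [Finset.mem_Icc, Finset.mem_insert]; omega
    rw [this, Finset.sum_insert (by simp)]
  have huval : uVal n ≤ ((b:ℝ)-2) * ((n:ℝ)-2) + (2*(n:ℝ) - 4) := by
    rw [uVal, ← hbdef, hsplit]
    have hb2pos : (0:ℝ) < (b:ℝ) - 2 := by linarith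
    have h2n4 : (0:ℝ) ≤ 2*(n:ℝ) - 4 := by linarith
    have : ((b:ℝ)-2) * (2*(n:ℝ)-4) * (1/((b:ℝ)-2) + ∑ i ∈ Finset.Icc (b+1) n, (1 : ℝ) / ((i : ℝ) - 2))
        ≤ ((b:ℝ)-2) * (2*(n:ℝ)-4) * (1/((b:ℝ)-2) + 1/2) := by
      apply mul_le_mul_of_nonneg_left (by linarith [hbT]) (by positivity)
    calc ((b:ℝ)-2) * (2*(n:ℝ)-4) * (1/((b:ℝ)-2) + ∑ i ∈ Finset.Icc (b+1) n, (1 : ℝ) / ((i : ℝ) - 2))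
        ≤ ((b:ℝ)-2) * (2*(n:ℝ)-4) * (1/((b:ℝ)-2) + 1/2) := this
      _ = ((b:ℝ)-2) * ((n:ℝ)-2) + (2*(n:ℝ) - 4) := by field_simp; ring
  -- f(b-1) ≤ 0
  have hcastb1 : ((b-1:ℕ):ℝ) = (b:ℝ) - 1 := by
    push_cast [Nat.cast_sub (by omega : 1 ≤ b)]; ring
  have hfval : fPoly n ((b-1:ℕ):ℝ) ≤ 0 := by
    rw [hcastb1, fPoly, ← hbdef]
    have hfactor : 3 * ((b:ℝ)-1)^2 - (1 + 4*(n:ℝ)) * ((b:ℝ)-1) + ((n:ℝ)-2)*(b:ℝ) + 2*((n:ℝ)+1)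
        + (((b:ℝ)-2) * ((n:ℝ)-2) + (2*(n:ℝ) - 4)) = ((b:ℝ)-3) * (3*(b:ℝ) - 2*(n:ℝ) - 2) := by
      ring
    nlinarith [huval, hfactor]
  -- conclude
  have hamem : (b-1) ∈ {j : ℕ | 2 ≤ j ∧ j ≤ n ∧ fPoly n (j : ℝ) ≤ 0} := by
    exact ⟨by omega, by omega, hfval⟩
  have := Nat.sInf_le hamem
  calc aThresh n ≤ b - 1 := this
    _ < b := by omega
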